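/- Let 𝒜_ρ := {X ∈ 𝒳 : ρ(X) ≤ 0}. Then: (i) for every m ∈ ℝ, {X ∈ 𝒳 : ρ(X) ≤ m} = 𝒜_ρ − m·U; (ii) 𝒜_ρ is (−U)-directionally closed; (iii) for every X ∈ 𝒳, inf{π(Z) : Z ∈ ℳ, X + Z ∈ 𝒜_ρ} = ρ(X), i.e. the risk measure associated with the acceptance set 𝒜_ρ coincides with ρ on all of 𝒳. -/

import Mathlib

open Pointwise

/-- The risk measure associated with acceptance set `A`, eligible payoffs `M`
and pricing functional `π` (infimum in the extended reals, `sInf ∅ = +∞`). -/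
noncomputable def rho {X : Type*} [AddCommGroup X] [Module ℝ X]
    (M : Submodule ℝ X) (π : M →ₗ[ℝ] ℝ) (A : Set X) (x : X) : EReal :=
  sInf {r : EReal | ∃ Z : M, x + (Z : X) ∈ A ∧ ((π Z : ℝ) : EReal) = r}

/-- The kernel of the pricing functional `π`, viewed as a subset of `X`. -/
def kerSet {X : Type*} [AddCommGroup X] [Module ℝ X]
    (M : Submodule ℝ X) (π : M →ₗ[ℝ] ℝ) : Set X :=
  Subtype.val '' {Z : M | π Z = 0}

/-- `K`-directional closure of `S`. -/
def clK {X : Type*} [AddCommGroup X] [Module ℝ X] (K : X) (S : Set X) : Set X :=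
  {x : X | ∀ l : ℝ, 0 < l → ∃ t : ℝ, 0 ≤ t ∧ t < l ∧ x - t • K ∈ S}

/-- `K`-directional interior of `S`. -/
def intK {X : Type*} [AddCommGroup X] [Module ℝ X] (K : X) (S : Set X) : Set X :=
  {x : X | ∃ l : ℝ, 0 < l ∧ ∀ t : ℝ, 0 ≤ t → t ≤ l → x + t • K ∈ S}

/-- `K`-directional boundary of `S`. -/
def bdK {X : Type*} [AddCommGroup X] [Module ℝ X] (K : X) (S : Set X) : Set X :=
  clK K S \ intK K S

/-- Recession cone of `S`. -/
def recCone {X : Type*} [AddCommGroup X] [Module ℝ X] (S : Set X) : Set X :=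
  {v : X | ∀ y ∈ S, ∀ l : ℝ, 0 ≤ l → y + l • v ∈ S}

noncomputable def erealSubIso (c : ℝ) : EReal ≃o EReal where
  toFun a := a - (c : EReal)
  invFun a := a + (c : EReal)
  left_inv a := EReal.sub_add_cancel
  right_inv a := EReal.add_sub_cancel_right
  map_rel_iff' := by
    intro a b
    constructor
    · intro h
      have := add_le_add_left h (c : EReal)
      simpa [EReal.sub_add_cancel] using this
    · intro h
      exact add_le_add_left h _

lemma ereal_sInf_sub (S : Set EReal) (c : ℝ) :
    sInf ((fun r => r - (c : EReal)) '' S) = sInf S - (c : EReal) := by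
  rw [sInf_image]
  exact ((erealSubIso c).map_sInf S).symm

/-- Cash additivity: `ρ(x + Z) = ρ(x) - π(Z)` for any eligible `Z`. -/
lemma rho_add {X : Type*} [AddCommGroup X] [Module ℝ X]
    (M : Submodule ℝ X) (π : M →ₗ[ℝ] ℝ) (A : Set X) (x : X) (Z : M) :
    rho M π A (x + (Z : X)) = rho M π A x - ((π Z : ℝ) : EReal) := by
  unfold rho
  rw [← ereal_sInf_sub]
  congr 1
  ext r
  constructor
  · rintro ⟨W, hW, rfl⟩
    refine ⟨((π (Z + W) : ℝ) : EReal), ⟨Z + W, ?_, rfl⟩, ?_⟩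
    · rwa [Submodule.coe_add, ← add_assoc]
    · rw [map_add]
      push_cast
      rw [add_comm ((π Z : ℝ) : EReal)]
      exact EReal.add_sub_cancel_right
  · rintro ⟨-, ⟨V, hV, rfl⟩, rfl⟩
    refine ⟨V - Z, ?_, ?_⟩
    · rwa [AddSubgroupClass.coe_sub, add_assoc, add_sub_cancel]
    · rw [map_sub]
      push_cast
      rfl


theorem stmt_15 {X : Type*} [AddCommGroup X] [Module ℝ X]
(Xpos : Set X)
    (hXpos0 : (0 : X) ∈ Xpos)
    (hXposSmul : ∀ t : ℝ, 0 ≤ t → ∀ x ∈ Xpos, t • x ∈ Xpos)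
    (hXposConv : Convex ℝ Xpos)
    (hXposPointed : ∀ x ∈ Xpos, -x ∈ Xpos → x = 0)
    (M : Submodule ℝ X) (π : M →ₗ[ℝ] ℝ)
    (U : M) (hUpos : (U : X) ∈ Xpos) (hU1 : π U = 1)
    (A : Set X) (hA0 : (0 : X) ∈ A) (hAne : A ≠ Set.univ) (hAmono : A + Xpos ⊆ A) :
    (∀ m : ℝ,
      {x : X | rho M π A x ≤ (m : EReal)}
        = (fun y => y - m • (U : X)) '' {x : X | rho M π A x ≤ (0 : EReal)}) ∧
    ({x : X | rho M π A x ≤ (0 : EReal)}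
        = clK (-(U : X)) {x : X | rho M π A x ≤ (0 : EReal)}) ∧
    (∀ x : X, rho M π {y : X | rho M π A y ≤ (0 : EReal)} x = rho M π A x) := by
  -- rho of a U-shift
  have key : ∀ (x : X) (c : ℝ), rho M π A (x + c • (U : X)) = rho M π A x - (c : EReal) := by
    intro x c
    have : rho M π A (x + ((c • U : M) : X)) = rho M π A x - ((π (c • U) : ℝ) : EReal) :=
      rho_add M π A x (c • U)
    simpa [hU1] using this
  refine ⟨?_, ?_, ?_⟩
  · intro m
    ext x
    simp only [Set.mem_setOf_eq, Set.mem_image]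
    constructor
    · intro hx
      refine ⟨x + m • (U : X), ?_, by abel⟩
      rw [key x m]
      calc rho M π A x - (m : EReal) ≤ (m : EReal) - m := by
            exact add_le_add_left hx _
        _ = 0 := by
            rw [← EReal.coe_sub]; norm_num
    · rintro ⟨y, hy, rfl⟩
      have : rho M π A (y + (-m) • (U : X)) = rho M π A y - ((-m : ℝ) : EReal) := key y (-m)
      have h2 : y - m • (U : X) = y + (-m) • (U : X) := by
        rw [neg_smul, ← sub_eq_add_neg]
      rw [h2, this]
      calc rho M π A y - ((-m : ℝ) : EReal) ≤ (0 : EReal) - ((-m : ℝ) : EReal) :=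
            add_le_add_left hy _
        _ = (m : EReal) := by
            rw [← EReal.coe_zero, ← EReal.coe_sub]; norm_num
  · ext x
    simp only [Set.mem_setOf_eq, clK]
    constructor
    · intro hx l hl
      exact ⟨0, le_refl 0, hl, by simpa using hx⟩
    · intro hx
      by_contra h
      push_neg at h
      obtain ⟨s, hs0, hs⟩ := EReal.exists_between_coe_real h
      obtain ⟨t, ht0, htl, hmem⟩ := hx s (by exact_mod_cast hs0)
      rw [smul_neg, sub_neg_eq_add, key x t] at hmem
      have : rho M π A x ≤ (t : EReal) := by
        have := add_le_add_left hmem (t : EReal)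
        simpa [EReal.sub_add_cancel] using this
      have : rho M π A x < (s : EReal) :=
        lt_of_le_of_lt this (by exact_mod_cast htl)
      exact absurd hs (not_lt.2 this.le)
  · intro x
    have hset : {r : EReal | ∃ Z : M, x + (Z : X) ∈ {y : X | rho M π A y ≤ (0 : EReal)}
        ∧ ((π Z : ℝ) : EReal) = r}
        = {r : EReal | ∃ Z : M, rho M π A x ≤ ((π Z : ℝ) : EReal) ∧ ((π Z : ℝ) : EReal) = r} := by
      ext r
      simp only [Set.mem_setOf_eq]
      constructor
      · rintro ⟨Z, hZ, rfl⟩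
        rw [rho_add M π A x Z] at hZ
        refine ⟨Z, ?_, rfl⟩
        have := add_le_add_left hZ ((π Z : ℝ) : EReal)
        simpa [EReal.sub_add_cancel] using this
      · rintro ⟨Z, hZ, rfl⟩
        refine ⟨Z, ?_, rfl⟩
        rw [rho_add M π A x Z]
        calc rho M π A x - ((π Z : ℝ) : EReal)
            ≤ ((π Z : ℝ) : EReal) - ((π Z : ℝ) : EReal) := add_le_add_left hZ _
          _ = 0 := by rw [← EReal.coe_sub]; norm_num
    show sInf _ = _
    rw [hset]
    apply le_antisymm
    · -- sInf ≤ rho x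
      rcases eq_top_or_lt_top (rho M π A x) with htop | hlt
      · rw [htop]; exact le_top
      · -- for every real c with rho x < c, sInf ≤ c
        refine le_of_forall_gt_imp_ge_of_dense ?_
        intro c hc
        obtain ⟨s, hs1, hs2⟩ := EReal.exists_between_coe_real hc
        have hmem : ((s : ℝ) : EReal) ∈
            {r : EReal | ∃ Z : M, rho M π A x ≤ ((π Z : ℝ) : EReal) ∧ ((π Z : ℝ) : EReal) = r} := by
          refine ⟨s • U, ?_, by simp [hU1]⟩
          simpa [hU1] using hs1.le
        exact le_trans (sInf_le hmem) hs2.le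
    · -- rho x ≤ sInf
      apply le_sInf
      rintro r ⟨Z, hZ, rfl⟩
      exact hZ
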